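/- Define, for x > 0, y > 0, u > 0 and v ∈ ℝ, g₁₁(x, y, u, v) = u·( y·v + x·u + (x + y)·√(u² + v²) )² / ( 4·x·y·(u² + v²) ). There exist x > 0, y > 0, u > 0, v > 0 such that the derivative of the function t ↦ g₁₁(x, y, u, t) at t = v is nonzero. Hence, since g₁₂ ≡ 0 (so ∂g₁₂/∂u ≡ 0), the Cartan tensor C_{ijk} = (1/2)·∂g_{ij}/∂ẋ^k of this metric is not totally symmetric. -/

import Mathlib

/-- Coefficient `g₁₁ = g₂₂` of the generalized Lagrange metric on the first quadrant. -/
noncomputable def quadrantG11' (x y u v : ℝ) : ℝ :=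
  u * (y * v + x * u + (x + y) * Real.sqrt (u ^ 2 + v ^ 2)) ^ 2 /
    (4 * x * y * (u ^ 2 + v ^ 2))

/-- Coefficient `g₁₂ = g₂₁ ≡ 0` of the generalized Lagrange metric on the first
quadrant. -/
def quadrantG12' (_x _y _u _v : ℝ) : ℝ := 0

lemma sqrt25 : Real.sqrt ((3:ℝ) ^ 2 + 4 ^ 2) = 5 := by
  rw [show (3:ℝ)^2 + 4^2 = 5^2 by norm_num]
  exact Real.sqrt_sq (by norm_num)

lemma hasDerivAt_g11 :
    HasDerivAt (fun t => quadrantG11' 1 1 3 t) (-1224 / 10000) 4 := by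
  have hin : HasDerivAt (fun t : ℝ => (3:ℝ) ^ 2 + t ^ 2) (2 * 4) 4 := by
    simpa using (hasDerivAt_pow 2 (4:ℝ)).const_add ((3:ℝ) ^ 2)
  have hs : HasDerivAt (fun t : ℝ => Real.sqrt ((3:ℝ) ^ 2 + t ^ 2)) (4 / 5) 4 := by
    have h2 := (Real.hasDerivAt_sqrt (by norm_num : (3:ℝ) ^ 2 + 4 ^ 2 ≠ 0)).comp 4 hin
    rw [Function.comp_def] at h2
    exact h2.congr_deriv (by rw [sqrt25]; norm_num)
  have hlin : HasDerivAt (fun t : ℝ => 1 * t + 1 * 3 + (1 + 1) * Real.sqrt ((3:ℝ)^2 + t^2))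
      (1 + (1 + 1) * (4 / 5)) 4 := by
    have h1 : HasDerivAt (fun t : ℝ => 1 * t + 1 * 3) 1 4 := by
      simpa using ((hasDerivAt_id (4:ℝ)).const_mul 1).add_const (1 * 3)
    exact h1.add (hs.const_mul (1 + 1))
  have hval : (1:ℝ) * 4 + 1 * 3 + (1 + 1) * Real.sqrt ((3:ℝ)^2 + 4^2) = 17 := by
    rw [sqrt25]; norm_num
  have hN : HasDerivAt
      (fun t : ℝ => 3 * (1 * t + 1 * 3 + (1 + 1) * Real.sqrt ((3:ℝ)^2 + t^2)) ^ 2)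
      (3 * (2 * 17 ^ 1 * (1 + (1 + 1) * (4 / 5)))) 4 := by
    have := (hlin.pow 2).const_mul 3
    rw [hval] at this
    simpa using this
  have hD : HasDerivAt (fun t : ℝ => 4 * 1 * 1 * ((3:ℝ) ^ 2 + t ^ 2)) (4 * 1 * 1 * (2 * 4)) 4 :=
    hin.const_mul (4 * 1 * 1)
  have hq := hN.div hD (by norm_num : (4:ℝ) * 1 * 1 * ((3:ℝ) ^ 2 + 4 ^ 2) ≠ 0)
  have heq : (fun t : ℝ =>
      3 * (1 * t + 1 * 3 + (1 + 1) * Real.sqrt ((3:ℝ)^2 + t^2)) ^ 2 /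
        (4 * 1 * 1 * ((3:ℝ) ^ 2 + t ^ 2))) = fun t => quadrantG11' 1 1 3 t := by
    funext t; simp [quadrantG11']
  simp only [Pi.div_def] at hq; rw [heq] at hq
  refine hq.congr_deriv ?_
  rw [hval]
  norm_num

theorem quadrant_cartan_not_symmetric :
    ∃ x y u v : ℝ, 0 < x ∧ 0 < y ∧ 0 < u ∧ 0 < v ∧
      deriv (fun t => quadrantG11' x y u t) v ≠ 0 ∧
      deriv (fun s => quadrantG12' x y s v) u = 0 ∧
      deriv (fun t => quadrantG11' x y u t) v ≠
        deriv (fun s => quadrantG12' x y s v) u := by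
  refine ⟨1, 1, 3, 4, by norm_num, by norm_num, by norm_num, by norm_num, ?_, ?_, ?_⟩ <;>
    simp [hasDerivAt_g11.deriv, quadrantG12']
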